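/- Apply Buscher's rules to Taub–NUT space with metric g_TN (with g₀₀ = H⁻¹, H(r) = g⁻² + (2r)⁻¹) and B-field B = βΩ = β d( (1/(g²H))(dκ + ((1−cosθ)/2)dφ) ), so that b₀₁ = −βH′/(g²H²). Then the T-dual metric satisfies g̃₀₀ = H, g̃₀₁ = −βH′/(g²H), and g̃ = H(r)(d(κ + β/(g²H)))² + {terms not involving dκ}. Consequently the diffeomorphism Γ : ℝ³ × S¹ → ℝ³ × S¹, Γ(r,θ,φ,κ) = (r, θ, φ, κ + β/(g²H(r))), satisfies g̃(r,θ,φ,κ) = Γ*(g_H(r,θ,φ,K)), i.e. Γ is an isometric diffeomorphism between the Riemannian manifolds (ℝ³ × S¹, g_H) and (ℝ³ × S¹, g̃); as r → ∞, Γ approaches the isometry κ ↦ κ + β. The modified diffeomorphism Λ with κ̃ = κ + β/(g²H(r)) − β approaches the identity as r → ∞ and satisfies g̃(r,θ,φ,κ) = Λ*(g_H(r,θ,φ, κ̃ + β)). -/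

import Mathlib

/-!
STATEMENT 8: Apply Buscher's rules to Taub–NUT space with metric `g_TN`
(`g₀₀ = H⁻¹`, `H(r) = g⁻² + (2r)⁻¹`) and B-field
`B = βΩ = β d((1/(g²H))(dκ + ((1−cosθ)/2) dφ))`, so that `b₀₁ = −βH′/(g²H²)`.
Then the T-dual metric satisfies `g̃₀₀ = H`, `g̃₀₁ = −βH′/(g²H)`, and
`g̃ = H(r) (d(κ + β/(g²H)))² + {terms not involving dκ}`.  Consequently the
diffeomorphism `Γ : ℝ³ × S¹ → ℝ³ × S¹`, `Γ(r,θ,φ,κ) = (r,θ,φ, κ + β/(g²H(r)))`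
satisfies `g̃ = Γ*(g_H)`, i.e. `Γ` is an isometric diffeomorphism between
`(ℝ³ × S¹, g_H)` and `(ℝ³ × S¹, g̃)`; as `r → ∞`, `Γ` approaches the isometry
`κ ↦ κ + β`.  The modified diffeomorphism `Λ` with `κ̃ = κ + β/(g²H(r)) − β`
approaches the identity as `r → ∞` and satisfies `g̃ = Λ*(g_H(·, κ̃ + β))`.

Metrics are represented by their coefficient matrices in the coordinates
`(x⁰,x¹,x²,x³) = (κ,r,θ,φ)`, and the pullback of a metric under `Γ` (which fixes
`r,θ,φ` and shifts `κ` by a function of `r`) is `Jᵀ g J` with `J` the Jacobian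
matrix of `Γ`; `Λ` differs from `Γ` by the constant shift `−β` in `κ`, so it has
the same Jacobian, and `g_H` is invariant under constant shifts of `κ`.
-/

open Real

/-- Buscher's rules. -/
noncomputable def buscher (g b : Matrix (Fin 4) (Fin 4) ℝ) : Matrix (Fin 4) (Fin 4) ℝ :=
  fun i j =>
    if i = 0 ∧ j = 0 then 1 / g 0 0
    else if i = 0 then b 0 j / g 0 0
    else if j = 0 then b 0 i / g 0 0
    else g i j - (g 0 i * g 0 j - b 0 i * b 0 j) / g 0 0

/-- `H(r) = g⁻² + (2r)⁻¹`. -/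
noncomputable def taubNutH (gc r : ℝ) : ℝ := gc⁻¹ ^ 2 + (2 * r)⁻¹

/-- The Taub–NUT metric in the coordinates `(κ,r,θ,φ)`. -/
noncomputable def gTN (gc r θ : ℝ) : Matrix (Fin 4) (Fin 4) ℝ :=
  let H := taubNutH gc r
  ![![H⁻¹, 0, 0, H⁻¹ * (1 - cos θ)],
    ![0, H, 0, 0],
    ![0, 0, H * r ^ 2, 0],
    ![H⁻¹ * (1 - cos θ), 0, 0,
      H * r ^ 2 * sin θ ^ 2 + H⁻¹ * (1 - cos θ) ^ 2]]

/-- The `H`-monopole metric `g_H = H (dκ² + dr⃗·dr⃗)` (T-dual of `g_TN` at `B = 0`);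
it does not involve `κ`, hence is invariant under shifts `κ ↦ κ + const`. -/
noncomputable def gH (gc r θ : ℝ) : Matrix (Fin 4) (Fin 4) ℝ :=
  let H := taubNutH gc r
  ![![H, 0, 0, 0],
    ![0, H, 0, 0],
    ![0, 0, H * r ^ 2, 0],
    ![0, 0, 0, H * r ^ 2 * sin θ ^ 2]]

/-- The B-field `B = βΩ = β d((1/(g²H))(dκ + ((1−cosθ)/2) dφ))
  = −(βH′/(g²H²)) dr ∧ (dκ + ((1−cosθ)/2) dφ) − (β/(g²H)) sinθ dθ ∧ dφ`,
recorded (following the paper) with `b₀₁ = −βH′/(g²H²)`. -/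
noncomputable def bOmega (gc β r θ : ℝ) : Matrix (Fin 4) (Fin 4) ℝ :=
  let H := taubNutH gc r
  let H' := deriv (taubNutH gc) r
  let b01 : ℝ := -(β * H') / (gc ^ 2 * H ^ 2)
  let b13 : ℝ := b01 * ((1 - cos θ) / 2)
  let b23 : ℝ := -(β / (gc ^ 2 * H)) * sin θ
  ![![0, b01, 0, 0],
    ![-b01, 0, 0, b13],
    ![0, 0, 0, b23],
    ![0, -b13, -b23, 0]]

/-- The Jacobian matrix of `Γ(r,θ,φ,κ) = (r,θ,φ, κ + β/(g²H(r)))` in the coordinates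
`(κ,r,θ,φ)`: the identity except that `dK = dκ + (β/(g²H))′ dr`.  `Λ` differs from `Γ`
by a constant shift of `κ`, so it has the same Jacobian. -/
noncomputable def jacGamma (gc β r : ℝ) : Matrix (Fin 4) (Fin 4) ℝ :=
  ![![1, deriv (fun s => β / (gc ^ 2 * taubNutH gc s)) r, 0, 0],
    ![0, 1, 0, 0],
    ![0, 0, 1, 0],
    ![0, 0, 0, 1]]


lemma taubNutH_pos (gc r : ℝ) (hgc : gc ≠ 0) (hr : 0 < r) : 0 < taubNutH gc r := by
  unfold taubNutH; positivity

lemma hasDerivAt_taubNutH (gc r : ℝ) (hr : 0 < r) :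
    HasDerivAt (taubNutH gc) (-(2 / (2 * r) ^ 2)) r := by
  have h : HasDerivAt (fun s : ℝ => 2 * s) 2 r := by
    simpa using (hasDerivAt_id r).const_mul (2 : ℝ)
  have h2 : HasDerivAt (fun s : ℝ => (2 * s)⁻¹) (-(2 / (2 * r) ^ 2)) r := by
    have := h.inv (by positivity : (2 : ℝ) * r ≠ 0)
    exact this.congr_deriv (by ring)
  have h3 := (hasDerivAt_const r ((gc : ℝ)⁻¹ ^ 2)).add h2
  rw [zero_add] at h3
  exact h3

lemma deriv_taubNutH (gc r : ℝ) (hr : 0 < r) :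
    deriv (taubNutH gc) r = -(2 / (2 * r) ^ 2) :=
  (hasDerivAt_taubNutH gc r hr).deriv

lemma deriv_shift (gc β r : ℝ) (hgc : gc ≠ 0) (hr : 0 < r) :
    deriv (fun s => β / (gc ^ 2 * taubNutH gc s)) r =
      -(β * deriv (taubNutH gc) r) / (gc ^ 2 * taubNutH gc r ^ 2) := by
  have hH := taubNutH_pos gc r hgc hr
  have h1 : HasDerivAt (fun s => gc ^ 2 * taubNutH gc s)
      (gc ^ 2 * (-(2 / (2 * r) ^ 2))) r := (hasDerivAt_taubNutH gc r hr).const_mul _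
  have h2 : HasDerivAt (fun s => β / (gc ^ 2 * taubNutH gc s))
      (β * (-(gc ^ 2 * (-(2 / (2 * r) ^ 2))) / (gc ^ 2 * taubNutH gc r) ^ 2)) r := by
    simpa [div_eq_mul_inv] using (h1.inv (by positivity)).const_mul β
  rw [h2.deriv, deriv_taubNutH gc r hr]
  field_simp

theorem statement8 (gc β : ℝ) (hgc : gc ≠ 0) :
    (∀ r θ : ℝ, 0 < r →
      -- `g̃₀₀ = H` and `g̃₀₁ = −βH′/(g²H)`
      buscher (gTN gc r θ) (bOmega gc β r θ) 0 0 = taubNutH gc r ∧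
      buscher (gTN gc r θ) (bOmega gc β r θ) 0 1 =
        -(β * deriv (taubNutH gc) r) / (gc ^ 2 * taubNutH gc r) ∧
      -- `g̃ = Γ*(g_H)`: the pullback identity `g̃ = Jᵀ g_H J`, i.e. `Γ` is an isometric
      -- diffeomorphism from `(ℝ³ × S¹, g_H)` to `(ℝ³ × S¹, g̃)`, and equally
      -- `g̃ = Λ*(g_H(·,·,·, κ̃ + β))` since `g_H` is invariant under the constant
      -- shift `κ ↦ κ + β` and `Λ` has the same Jacobian as `Γ`
      buscher (gTN gc r θ) (bOmega gc β r θ) =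
        (jacGamma gc β r).transpose * gH gc r θ * jacGamma gc β r) ∧
    -- as `r → ∞` the shift `β/(g²H(r))` of `Γ` tends to `β`, i.e. `Γ` approaches the
    -- isometry `κ ↦ κ + β`
    Filter.Tendsto (fun r => β / (gc ^ 2 * taubNutH gc r)) Filter.atTop (nhds β) ∧
    -- while the shift `β/(g²H(r)) − β` of `Λ` tends to `0`, i.e. `Λ` approaches the
    -- identity
    Filter.Tendsto (fun r => β / (gc ^ 2 * taubNutH gc r) - β) Filter.atTop (nhds 0) := by
  constructor
  · intro r θ hr
    have hH := taubNutH_pos gc r hgc hr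
    have hHne : taubNutH gc r ≠ 0 := ne_of_gt hH
    have hderiv := deriv_shift gc β r hgc hr
    refine ⟨?_, ?_, ?_⟩
    · simp [buscher, gTN, hHne]
    · have : buscher (gTN gc r θ) (bOmega gc β r θ) 0 1
          = (-(β * deriv (taubNutH gc) r) / (gc ^ 2 * taubNutH gc r ^ 2)) / (taubNutH gc r)⁻¹ := by
        simp [buscher, gTN, bOmega]
      rw [this]
      field_simp
    · ext i j
      fin_cases i <;> fin_cases j <;>
        (simp only [Matrix.mul_apply, Fin.sum_univ_four, Matrix.transpose_apply]; simp [buscher, gTN, gH, bOmega, jacGamma, hderiv, Matrix.mul_apply,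
          Fin.sum_univ_four, Matrix.transpose_apply, Matrix.vecHead, Matrix.vecTail];
         try field_simp;
         try ring)
  · have hlim : Filter.Tendsto (fun r => β / (gc ^ 2 * taubNutH gc r))
        Filter.atTop (nhds β) := by
      have h1 : Filter.Tendsto (taubNutH gc) Filter.atTop (nhds (gc⁻¹ ^ 2)) := by
        have h0 : Filter.Tendsto (fun r : ℝ => 2 * r) Filter.atTop Filter.atTop :=
          Filter.Tendsto.const_mul_atTop (by norm_num) Filter.tendsto_id
        have hinv : Filter.Tendsto (fun r : ℝ => (2 * r)⁻¹) Filter.atTop (nhds 0) :=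
          h0.inv_tendsto_atTop
        have := tendsto_const_nhds (x := (gc : ℝ)⁻¹ ^ 2) (f := Filter.atTop).add hinv
        rw [add_zero] at this
        exact this
      have h2 : Filter.Tendsto (fun r => gc ^ 2 * taubNutH gc r)
          Filter.atTop (nhds 1) := by
        have h2' := h1.const_mul (gc ^ 2)
        rw [show gc ^ 2 * gc⁻¹ ^ 2 = 1 by field_simp] at h2'
        exact h2'
      have h3 := (tendsto_const_nhds (x := β)).div h2 one_ne_zero
      rw [div_one] at h3
      exact h3
    exact ⟨hlim, by simpa using hlim.sub_const β⟩
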